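/- Let x ∈ ℝⁿ with x ≥ 0 componentwise, and let M be an m×n real matrix, m a vector in ℝᵐ, and ε ≥ 0. For any vector y ∈ ℝᵐ satisfying (M - ε·𝟙)x + (m - ε·𝟙) ≤ y ≤ (M + ε·𝟙)x + (m + ε·𝟙) componentwise, there exist a matrix W with |W_{ij} - M_{ij}| ≤ ε for all i,j and a vector b with |b_i - m_i| ≤ ε for all i, such that y = W x + b. -/
import Mathlib


theorem realizability_nonneg_input
    {m n : ℕ} (M : Matrix (Fin m) (Fin n) ℝ) (mv : Fin m → ℝ) (ε : ℝ)
    (hε : 0 ≤ ε)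
    (x : Fin n → ℝ) (hx : ∀ j, 0 ≤ x j)
    (y : Fin m → ℝ)
    (hlo : (M - Matrix.of fun _ _ => ε).mulVec x + (mv - fun _ => ε) ≤ y)
    (hhi : y ≤ (M + Matrix.of fun _ _ => ε).mulVec x + (mv + fun _ => ε)) :
    ∃ (W : Matrix (Fin m) (Fin n) ℝ) (b : Fin m → ℝ),
      (∀ i j, |W i j - M i j| ≤ ε) ∧ (∀ i, |b i - mv i| ≤ ε) ∧
      y = W.mulVec x + b := by
  set S : ℝ := ∑ j, x j with hSdef
  have hS : 0 ≤ S := Finset.sum_nonneg fun j _ => hx j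
  have hS1 : 0 < S + 1 := by linarith
  set t : Fin m → ℝ := fun i => y i - (M.mulVec x i + mv i) with htdef
  set c : Fin m → ℝ := fun i => t i / (S + 1) with hcdef
  have ht : ∀ i, |t i| ≤ ε * (S + 1) := by
    intro i
    have h1 := hlo i
    have h2 := hhi i
    simp only [Matrix.sub_mulVec, Matrix.add_mulVec, Pi.add_apply, Pi.sub_apply,
      Matrix.mulVec, dotProduct, Matrix.of_apply] at h1 h2
    have hsum : ∑ j, ε * x j = ε * S := by rw [hSdef, Finset.mul_sum]
    rw [hsum] at h1 h2
    rw [abs_le]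
    constructor <;> simp only [htdef, Matrix.mulVec, dotProduct] <;> nlinarith
  have hc : ∀ i, |c i| ≤ ε := by
    intro i
    rw [hcdef, abs_div, abs_of_pos hS1, div_le_iff₀ hS1]
    simpa using ht i
  refine ⟨fun i j => M i j + c i, fun i => mv i + c i, ?_, ?_, ?_⟩
  · intro i j; simpa using hc i
  · intro i; simpa using hc i
  · funext i
    have : (Matrix.mulVec (fun i j => M i j + c i) x) i = M.mulVec x i + c i * S := by
      simp [Matrix.mulVec, dotProduct, add_mul, Finset.sum_add_distrib,
        ← Finset.mul_sum, hSdef]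
    simp only [Pi.add_apply, this]
    have hct : c i * (S + 1) = t i := by
      rw [hcdef]; field_simp
    have : t i = y i - (M.mulVec x i + mv i) := rfl
    nlinarith [hct]
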